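/- Let f : ℝⁿ → ℝ be convex and differentiable with L-Lipschitz gradient. Then the gradient satisfies the cocoercivity inequality: for all x, y, ⟪∇f(x) - ∇f(y), x - y⟫ ≥ (1/L)·‖∇f(x) - ∇f(y)‖². -/

import Mathlib

open RealInnerProductSpace

section aux

variable {n : ℕ}

local notation "E" => EuclideanSpace ℝ (Fin n)

/-- Derivative of the restriction of `f` to a line. -/
lemma line_hasDerivAt (f : E → ℝ) (hf : Differentiable ℝ f) (x v : E) (t : ℝ) :
    HasDerivAt (fun s : ℝ => f (x + s • v)) ⟪gradient f (x + t • v), v⟫ t := by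
  have hline : HasDerivAt (fun s : ℝ => x + s • v) v t := by
    simpa using ((hasDerivAt_id t).smul_const v).const_add x
  have hgrad := (hf (x + t • v)).hasGradientAt.hasFDerivAt
  have := hgrad.comp_hasDerivAt t hline
  exact this.congr_deriv (by simp [InnerProductSpace.toDual_apply_apply])

/-- First-order condition for convexity. -/
lemma grad_ineq (f : E → ℝ) (hconv : ConvexOn ℝ Set.univ f)
    (hf : Differentiable ℝ f) (x y : E) :
    f x + ⟪gradient f x, y - x⟫ ≤ f y := by
  set φ : ℝ → ℝ := fun s => f (x + s • (y - x)) with hφ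
  have hφconv : ConvexOn ℝ Set.univ φ := by
    have := hconv.comp_affineMap (AffineMap.lineMap x y : ℝ →ᵃ[ℝ] E)
    have heq : ∀ s : ℝ, (AffineMap.lineMap x y : ℝ →ᵃ[ℝ] E) s = x + s • (y - x) := by
      intro s; simp [AffineMap.lineMap_apply]; module
    refine ConvexOn.congr (by simpa using this) ?_
    intro s _; simp [heq, hφ, Function.comp]
  have hder : HasDerivAt φ ⟪gradient f (x + (0:ℝ) • (y - x)), y - x⟫ 0 :=
    line_hasDerivAt f hf x (y - x) 0
  have hslope := hφconv.le_slope_of_hasDerivAt (Set.mem_univ 0) (Set.mem_univ 1)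
    one_pos hder
  have h01 : φ 0 = f x := by simp [hφ]
  have h11 : φ 1 = f y := by simp [hφ]
  rw [slope_def_field] at hslope
  simp only [zero_smul, add_zero] at hslope
  rw [h01, h11] at hslope
  nlinarith [hslope]

/-- Descent lemma. -/
lemma descent (f : E → ℝ) (hf : Differentiable ℝ f) (L : ℝ) (hL : 0 < L)
    (hlip : LipschitzWith (Real.toNNReal L) (gradient f)) (x y : E) :
    f y ≤ f x + ⟪gradient f x, y - x⟫ + L / 2 * ‖y - x‖ ^ 2 := by
  set v : E := y - x with hv
  set φ : ℝ → ℝ := fun s => f (x + s • v) with hφ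
  set c : ℝ := ⟪gradient f x, v⟫ with hc
  have hder : ∀ t : ℝ, HasDerivAt φ ⟪gradient f (x + t • v), v⟫ t :=
    fun t => line_hasDerivAt f hf x v t
  -- apply the comparison lemma to ψ t = φ t - t * c with B t = φ 0 + L/2 ‖v‖² t²
  have hψ : ∀ t : ℝ, HasDerivAt (fun s => φ s - s * c)
      (⟪gradient f (x + t • v), v⟫ - c) t := by
    intro t
    exact ((hder t).sub ((hasDerivAt_id t).mul_const c)).congr_deriv (by simp)
  have key : ∀ ⦃t : ℝ⦄, t ∈ Set.Icc (0:ℝ) 1 →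
      φ t - t * c ≤ φ 0 + L / 2 * ‖v‖ ^ 2 * t ^ 2 := by
    have hcont : ContinuousOn (fun t => φ t - t * c) (Set.Icc (0:ℝ) 1) :=
      fun t _ => (hψ t).continuousAt.continuousWithinAt
    have hder' : ∀ t ∈ Set.Ico (0:ℝ) 1, HasDerivWithinAt (fun s => φ s - s * c)
        (⟪gradient f (x + t • v), v⟫ - c) (Set.Ici t) t :=
      fun t _ => (hψ t).hasDerivWithinAt
    have ha : φ 0 - 0 * c ≤ φ 0 + L / 2 * ‖v‖ ^ 2 * (0:ℝ) ^ 2 := by simp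
    have hB : ContinuousOn (fun t : ℝ => φ 0 + L / 2 * ‖v‖ ^ 2 * t ^ 2) (Set.Icc (0:ℝ) 1) :=
      ((continuous_const.add (continuous_const.mul (continuous_pow 2))).continuousOn)
    have hB' : ∀ t ∈ Set.Ico (0:ℝ) 1, HasDerivWithinAt
        (fun s : ℝ => φ 0 + L / 2 * ‖v‖ ^ 2 * s ^ 2) (L * ‖v‖ ^ 2 * t) (Set.Ici t) t := by
      intro t _
      have h := ((hasDerivAt_pow 2 t).const_mul (L / 2 * ‖v‖ ^ 2)).const_add (φ 0)
      have h' := h.hasDerivWithinAt (s := Set.Ici t)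
      refine h'.congr_deriv ?_
      push_cast; ring
    have bound : ∀ t ∈ Set.Ico (0:ℝ) 1,
        ⟪gradient f (x + t • v), v⟫ - c ≤ L * ‖v‖ ^ 2 * t := by
      intro t ht
      have h1 : ⟪gradient f (x + t • v) - gradient f x, v⟫ ≤
          ‖gradient f (x + t • v) - gradient f x‖ * ‖v‖ :=
        real_inner_le_norm _ _
      have h2 : ‖gradient f (x + t • v) - gradient f x‖ ≤ L * (t * ‖v‖) := by
        have hd := hlip.dist_le_mul (x + t • v) x
        rw [dist_eq_norm, dist_eq_norm] at hd
        simp only [add_sub_cancel_left] at hd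
        rw [Real.coe_toNNReal L hL.le] at hd
        calc ‖gradient f (x + t • v) - gradient f x‖ ≤ L * ‖t • v‖ := hd
          _ = L * (|t| * ‖v‖) := by rw [norm_smul]; simp
          _ = L * (t * ‖v‖) := by rw [abs_of_nonneg ht.1]
      have h3 : ⟪gradient f (x + t • v), v⟫ - ⟪gradient f x, v⟫ ≤ L * ‖v‖ ^ 2 * t := by
        have := h1.trans (by nlinarith [norm_nonneg v, h2] :
          ‖gradient f (x + t • v) - gradient f x‖ * ‖v‖ ≤ L * ‖v‖ ^ 2 * t)
        rwa [inner_sub_left] at this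
      rw [hc]
      linarith [h3]
    exact image_le_of_deriv_right_le_deriv_boundary hcont hder' ha hB hB' bound
  have h1 := key (Set.mem_Icc.mpr ⟨zero_le_one, le_refl 1⟩)
  have hφ1 : φ 1 = f y := by simp [hφ, hv]
  have hφ0 : φ 0 = f x := by simp [hφ]
  rw [hφ1, hφ0] at h1
  simp only [one_pow, mul_one, one_mul] at h1
  linarith [h1]

/-- Key one-sided estimate: `f x + ⟪∇f x, y - x⟫ + (1/(2L)) ‖∇f y - ∇f x‖² ≤ f y`. -/
lemma key_est (f : E → ℝ) (hconv : ConvexOn ℝ Set.univ f)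
    (hf : Differentiable ℝ f) (L : ℝ) (hL : 0 < L)
    (hlip : LipschitzWith (Real.toNNReal L) (gradient f)) (x y : E) :
    f x + ⟪gradient f x, y - x⟫ + 1 / (2 * L) * ‖gradient f y - gradient f x‖ ^ 2 ≤ f y := by
  set d : E := gradient f y - gradient f x with hd
  set z : E := y - L⁻¹ • d with hz
  have h1 : f z ≤ f y + ⟪gradient f y, z - y⟫ + L / 2 * ‖z - y‖ ^ 2 :=
    descent f hf L hL hlip y z
  have h2 : f x + ⟪gradient f x, z - x⟫ ≤ f z := grad_ineq f hconv hf x z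
  have hzy : z - y = -(L⁻¹ • d) := by rw [hz]; abel
  have hzx : z - x = (y - x) - L⁻¹ • d := by rw [hz]; abel
  have e1 : ⟪gradient f y, z - y⟫ = -(L⁻¹ * ⟪gradient f y, d⟫) := by
    rw [hzy, inner_neg_right, real_inner_smul_right]
  have e2 : ‖z - y‖ ^ 2 = L⁻¹ ^ 2 * ‖d‖ ^ 2 := by
    rw [hzy, norm_neg, norm_smul]
    simp [mul_pow, abs_of_nonneg (inv_nonneg.mpr hL.le)]
  have e3 : ⟪gradient f x, z - x⟫ = ⟪gradient f x, y - x⟫ - L⁻¹ * ⟪gradient f x, d⟫ := by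
    rw [hzx, inner_sub_right, real_inner_smul_right]
  have e4 : ⟪gradient f y, d⟫ - ⟪gradient f x, d⟫ = ‖d‖ ^ 2 := by
    rw [← inner_sub_left, ← hd, real_inner_self_eq_norm_sq]
  rw [e1, e2] at h1
  rw [e3] at h2
  have e4' : L⁻¹ * ⟪gradient f y, d⟫ - L⁻¹ * ⟪gradient f x, d⟫ = L⁻¹ * ‖d‖ ^ 2 := by
    rw [← mul_sub, e4]
  have e5 : L / 2 * (L⁻¹ ^ 2 * ‖d‖ ^ 2) = 1 / (2 * L) * ‖d‖ ^ 2 := by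
    field_simp
  have e6 : 1 / (2 * L) * ‖d‖ ^ 2 + 1 / (2 * L) * ‖d‖ ^ 2 = L⁻¹ * ‖d‖ ^ 2 := by
    field_simp; ring
  linarith [h1, h2, e4', e5, e6]

end aux

theorem cocoercivity {n : ℕ} (f : EuclideanSpace ℝ (Fin n) → ℝ)
    (hconv : ConvexOn ℝ Set.univ f) (hf : Differentiable ℝ f)
    (L : ℝ) (hL : 0 < L)
    (hlip : LipschitzWith (Real.toNNReal L) (gradient f)) :
    ∀ x y : EuclideanSpace ℝ (Fin n),
      ⟪gradient f x - gradient f y, x - y⟫ ≥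
        (1 / L) * ‖gradient f x - gradient f y‖ ^ 2 := by
  intro x y
  have h1 := key_est f hconv hf L hL hlip x y
  have h2 := key_est f hconv hf L hL hlip y x
  have hnorm : ‖gradient f y - gradient f x‖ = ‖gradient f x - gradient f y‖ := by
    rw [← norm_neg]; congr 1; abel
  have hinner : ⟪gradient f x, y - x⟫ + ⟪gradient f y, x - y⟫ =
      -⟪gradient f x - gradient f y, x - y⟫ := by
    rw [inner_sub_left]
    have : ⟪gradient f x, y - x⟫ = -⟪gradient f x, x - y⟫ := by
      rw [← inner_neg_right]; congr 1; abel
    rw [this]; ring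
  rw [hnorm] at h1
  have e7 : 1 / (2 * L) * ‖gradient f x - gradient f y‖ ^ 2 +
      1 / (2 * L) * ‖gradient f x - gradient f y‖ ^ 2 =
      1 / L * ‖gradient f x - gradient f y‖ ^ 2 := by
    field_simp; ring
  linarith [h1, h2, e7]
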